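/- Let n ≥ 1 and let K_{n+1} be the complete graph on n + 1 vertices. For every vertex P of K_{n+1}, the rank Weierstrass set of K_{n+1} at P equals the numerical semigroup generated by n and n + 1, i.e., H_r(P) = { an + b(n+1) : a, b ∈ ℕ }. -/

import Mathlib

open scoped Classical

/-- A graph: a finite connected multigraph with no loop edges, given by a symmetric
edge-multiplicity function on a finite nonempty vertex type. -/
structure Multigraph where
  V : Type
  [fintypeV : Fintype V]
  [decEqV : DecidableEq V]
  [nonemptyV : Nonempty V]
  adj : V → V → ℕ
  adj_symm : ∀ u v, adj u v = adj v u
  adj_loopless : ∀ v, adj v v = 0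
  conn : ∀ u v, Relation.ReflTransGen (fun a b => adj a b ≠ 0) u v

attribute [instance] Multigraph.fintypeV Multigraph.decEqV Multigraph.nonemptyV

namespace Multigraph

variable (G : Multigraph)

/-- A simple graph: no multiple edges and more than one vertex. -/
def Simple : Prop :=
  (∀ u v, G.adj u v ≤ 1) ∧ 1 < Fintype.card G.V

/-- The degree of a divisor. -/
def deg (D : G.V → ℤ) : ℤ := ∑ v, D v

/-- A divisor is effective if all its coefficients are nonnegative. -/
def Effective (D : G.V → ℤ) : Prop := ∀ v, 0 ≤ D v

/-- The Laplacian of an integer-valued function on the vertices. -/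
def lap (f : G.V → ℤ) : G.V → ℤ := fun v => ∑ w, (G.adj v w : ℤ) * (f v - f w)

/-- The linear system `|D|` is nonempty, i.e. `D` is linearly equivalent to an
effective divisor. -/
def LinNonempty (D : G.V → ℤ) : Prop :=
  ∃ f : G.V → ℤ, G.Effective (D - G.lap f)

/-- The Baker–Norine rank of a divisor: `-1` if `|D| = ∅`, otherwise the maximal
`k` such that `|D - E| ≠ ∅` for every effective divisor `E` of degree `k`. -/
noncomputable def rank (D : G.V → ℤ) : ℤ :=
  if G.LinNonempty D then
    ((sSup {k : ℕ | ∀ E : G.V → ℤ, G.Effective E → G.deg E = (k : ℤ) →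
        G.LinNonempty (D - E)} : ℕ) : ℤ)
  else -1

/-- The divisor `n • P`. -/
def pt (P : G.V) (n : ℤ) : G.V → ℤ := fun v => if v = P then n else 0

/-- The rank Weierstrass set of `G` at `P`. -/
def Hr (P : G.V) : Set ℕ :=
  {n : ℕ | G.rank (G.pt P ((n : ℤ) - 1)) < G.rank (G.pt P (n : ℤ))}

/-- The functional Weierstrass set of `G` at `P`: pole orders at `P` of functions
with a unique pole at `P`. -/
def Hf (P : G.V) : Set ℕ :=
  {n : ℕ | ∃ f : G.V → ℤ, G.lap f P = -(n : ℤ) ∧ ∀ Q, Q ≠ P → 0 ≤ G.lap f Q}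

/-- The number of edges joining `Q` to vertices outside `A`. -/
def outdeg (A : Finset G.V) (Q : G.V) : ℕ := ∑ R ∈ Aᶜ, G.adj Q R

/-- A divisor is `P`-reduced. -/
def Reduced (P : G.V) (D : G.V → ℤ) : Prop :=
  (∀ Q, Q ≠ P → 0 ≤ D Q) ∧
  ∀ A : Finset G.V, A.Nonempty → P ∉ A → ∃ Q ∈ A, D Q < (G.outdeg A Q : ℤ)

/-- `G` is the graph `B_n` with two vertices joined by `n` parallel edges. -/
def IsBanana (n : ℕ) : Prop :=
  Fintype.card G.V = 2 ∧ ∀ u v, u ≠ v → G.adj u v = n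

/-- `G` is the complete graph on `n` vertices. -/
def IsComplete (n : ℕ) : Prop :=
  Fintype.card G.V = n ∧ ∀ u v, u ≠ v → G.adj u v = 1

/-- `G` is the complete bipartite graph with parts `A` (of size `m`) and its
complement (of size `n`). -/
def IsCompleteBipartite (A : Finset G.V) (m n : ℕ) : Prop :=
  A.card = m ∧ Aᶜ.card = n ∧
  ∀ u v, G.adj u v = if (u ∈ A ∧ v ∉ A) ∨ (u ∉ A ∧ v ∈ A) then 1 else 0

/-- `λ_Q(k)`: the least `n` with `r(nQ) = k`. -/
noncomputable def lam (Q : G.V) (k : ℕ) : ℕ :=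
  sInf {n : ℕ | G.rank (G.pt Q (n : ℤ)) = (k : ℤ)}

end Multigraph

/-- `G` is the vertex gluing of `G₁` and `G₂` identifying `P₁` and `P₂` into `P`. -/
def IsVertexGluing (G G₁ G₂ : Multigraph) (P : G.V) (P₁ : G₁.V) (P₂ : G₂.V) : Prop :=
  ∃ (ι₁ : G₁.V → G.V) (ι₂ : G₂.V → G.V),
    Function.Injective ι₁ ∧ Function.Injective ι₂ ∧
    ι₁ P₁ = P ∧ ι₂ P₂ = P ∧
    (∀ a b, ι₁ a = ι₂ b → ι₁ a = P) ∧
    (∀ v : G.V, (∃ a, ι₁ a = v) ∨ (∃ b, ι₂ b = v)) ∧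
    (∀ a b, G.adj (ι₁ a) (ι₁ b) = G₁.adj a b) ∧
    (∀ a b, G.adj (ι₂ a) (ι₂ b) = G₂.adj a b) ∧
    (∀ a b, ι₁ a ≠ P → ι₂ b ≠ P → G.adj (ι₁ a) (ι₂ b) = 0)


open Finset

namespace Multigraph

variable {G : Multigraph}

lemma deg_lap (f : G.V → ℤ) : G.deg (G.lap f) = 0 := by
  unfold deg lap
  set S := ∑ v, ∑ w, (G.adj v w : ℤ) * (f v - f w) with hS
  have h1 : S = ∑ w, ∑ v, (G.adj v w : ℤ) * (f v - f w) := Finset.sum_comm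
  have h2 : S = -S := by
    nth_rewrite 2 [h1]
    rw [← Finset.sum_neg_distrib]
    refine Finset.sum_congr rfl fun v _ => ?_
    rw [← Finset.sum_neg_distrib]
    refine Finset.sum_congr rfl fun w _ => ?_
    rw [G.adj_symm v w]; ring
  linarith

lemma deg_sub (D E : G.V → ℤ) : G.deg (D - E) = G.deg D - G.deg E := by
  unfold deg; simp [Finset.sum_sub_distrib]

lemma lin_deg_nonneg {D : G.V → ℤ} (h : G.LinNonempty D) : 0 ≤ G.deg D := by
  obtain ⟨f, hf⟩ := h
  have h1 : 0 ≤ G.deg (D - G.lap f) := Finset.sum_nonneg fun v _ => hf v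
  rwa [deg_sub, deg_lap, sub_zero] at h1

lemma deg_pt (P : G.V) (m : ℤ) : G.deg (G.pt P m) = m := by
  unfold deg pt; simp

end Multigraph
namespace Multigraph

variable {G : Multigraph} {n : ℕ}

lemma emod_le_self {x N : ℤ} (hN : 0 < N) (hx : 0 ≤ x) : x % N ≤ x := by
  have h1 : 0 ≤ x / N := Int.ediv_nonneg hx hN.le
  have h2 := Int.mul_ediv_add_emod x N
  nlinarith

lemma lap_complete (hG : G.IsComplete (n+1)) (f : G.V → ℤ) (v : G.V) :
    G.lap f v = (n+1) * f v - ∑ w, f w := by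
  unfold lap
  rw [Finset.sum_congr rfl (fun w _ => show (G.adj v w : ℤ) * (f v - f w) = f v - f w by
    by_cases h : v = w
    · subst h; simp [G.adj_loopless]
    · rw [hG.2 v w h]; simp)]
  rw [Finset.sum_sub_distrib]
  simp only [Finset.sum_const, Finset.card_univ, hG.1, nsmul_eq_mul]
  push_cast; ring

lemma crit (hG : G.IsComplete (n+1)) (D : G.V → ℤ) :
    G.LinNonempty D ↔ ∃ σ : ℤ, ∑ v, ((D v + σ) % (n+1 : ℤ)) ≤ G.deg D := by
  have hN : (0:ℤ) < (n+1:ℤ) := by positivity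
  constructor
  · rintro ⟨f, hf⟩
    refine ⟨∑ w, f w, ?_⟩
    have key : ∀ v, (D v + ∑ w, f w) % (n+1:ℤ) ≤ D v + ∑ w, f w - (n+1) * f v := by
      intro v
      have h0 : 0 ≤ D v + ∑ w, f w - (n+1) * f v := by
        have := hf v
        simp only [Pi.sub_apply, lap_complete hG] at this
        linarith
      have h1 : (D v + ∑ w, f w) % (n+1:ℤ)
          = (D v + ∑ w, f w - (n+1) * f v) % (n+1:ℤ) := by
        rw [sub_eq_add_neg, ← mul_neg, Int.add_mul_emod_self_left]
      rw [h1]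
      exact emod_le_self hN h0
    calc ∑ v, (D v + ∑ w, f w) % (n+1:ℤ)
        ≤ ∑ v, (D v + ∑ w, f w - (n+1) * f v) :=
          Finset.sum_le_sum fun v _ => key v
      _ = G.deg D := by
          rw [Finset.sum_sub_distrib, Finset.sum_add_distrib]
          simp only [Finset.sum_const, Finset.card_univ, hG.1, nsmul_eq_mul,
            ← Finset.mul_sum, deg]
          push_cast; ring
  · rintro ⟨σ, hσ⟩
    set N : ℤ := (n+1 : ℤ) with hNdef
    set flr : G.V → ℤ := fun v => (D v + σ) / N with hflr
    have hsum : ∀ v, N * flr v + (D v + σ) % N = D v + σ := fun v => Int.mul_ediv_add_emod _ _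
    have hge : σ ≤ ∑ v, flr v := by
      have h1 : ∑ v, (N * flr v + (D v + σ) % N) = ∑ v, (D v + σ) := by
        exact Finset.sum_congr rfl fun v _ => hsum v
      rw [Finset.sum_add_distrib, ← Finset.mul_sum] at h1
      have h2 : ∑ v, (D v + σ) = G.deg D + N * σ := by
        rw [Finset.sum_add_distrib]
        simp only [Finset.sum_const, Finset.card_univ, hG.1, nsmul_eq_mul, deg]
        push_cast; ring
      rw [h2] at h1
      have h3 : N * σ ≤ N * ∑ v, flr v := by linarith
      exact le_of_mul_le_mul_left h3 hN
    obtain ⟨v₀⟩ := G.nonemptyV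
    refine ⟨fun v => flr v - if v = v₀ then (∑ w, flr w) - σ else 0, fun v => ?_⟩
    have hSig : ∑ v, (flr v - if v = v₀ then (∑ w, flr w) - σ else 0) = σ := by
      rw [Finset.sum_sub_distrib, Finset.sum_ite_eq' Finset.univ v₀]
      simp
    simp only [Pi.sub_apply, lap_complete hG, hSig]
    have hle : (fun v => flr v - if v = v₀ then (∑ w, flr w) - σ else 0) v ≤ flr v := by
      by_cases h : v = v₀ <;> simp [h] <;> linarith
    have hmod0 : 0 ≤ (D v + σ) % N := Int.emod_nonneg _ (by positivity)
    have := hsum v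
    have : N * flr v ≤ D v + σ := by linarith
    have h5 : (n+1 : ℤ) * (flr v - if v = v₀ then (∑ w, flr w) - σ else 0) ≤ N * flr v := by
      have : (flr v - if v = v₀ then (∑ w, flr w) - σ else 0) ≤ flr v := hle
      have := mul_le_mul_of_nonneg_left this hN.le
      simpa [hNdef] using this
    linarith

end Multigraph
namespace KCG
open Finset

def tri (j : ℕ) : ℕ := ∑ i ∈ range j, i

lemma tri_succ (j : ℕ) : tri (j+1) = tri j + j := Finset.sum_range_succ _ _

lemma tri_mono {i j : ℕ} (h : i ≤ j) : tri i ≤ tri j :=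
  Finset.sum_le_sum_of_subset (Finset.range_subset_range.2 h)

lemma two_tri (j : ℕ) : 2 * tri (j+1) = j * (j+1) := by
  induction j with
  | zero => simp [tri]
  | succ j ih => rw [tri_succ]; ring_nf; ring_nf at ih; omega

noncomputable def cnt (n m : ℕ) : ℕ :=
  ((range (m+1)).filter (fun x => ∃ a b : ℕ, x = a * n + b * (n + 1))).card

lemma cnt_pos (n m : ℕ) : 1 ≤ cnt n m := by
  have h0 : 0 ∈ (range (m+1)).filter (fun x => ∃ a b : ℕ, x = a * n + b * (n + 1)) := by
    simp only [mem_filter, mem_range]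
    exact ⟨by omega, 0, 0, by ring⟩
  exact Finset.card_pos.2 ⟨0, h0⟩

lemma cnt_le (n m : ℕ) : cnt n m ≤ m + 1 := by
  have := Finset.card_le_card (Finset.filter_subset
    (fun x => ∃ a b : ℕ, x = a * n + b * (n + 1)) (range (m+1)))
  simpa [cnt] using this

lemma cnt_gap (n M m : ℕ) (h : M ≤ m) : cnt n m ≤ cnt n M + (m - M) := by
  unfold cnt
  have hsub : (range (m+1)).filter (fun x => ∃ a b : ℕ, x = a * n + b * (n + 1)) ⊆
      ((range (M+1)).filter (fun x => ∃ a b : ℕ, x = a * n + b * (n + 1))) ∪ Finset.Icc (M+1) m := by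
    intro x hx
    simp only [mem_filter, mem_range] at hx
    rcases le_or_gt x M with h1 | h1
    · exact Finset.mem_union_left _ (by simp only [mem_filter, mem_range]; exact ⟨by omega, hx.2⟩)
    · exact Finset.mem_union_right _ (by simp only [Finset.mem_Icc]; omega)
  calc _ ≤ _ := Finset.card_le_card hsub
    _ ≤ _ + _ := Finset.card_union_le _ _
    _ ≤ _ := by rw [Nat.card_Icc]; omega

/-- membership in the semigroup for large values -/
lemma mem_S_of_ge (n x : ℕ) (hn : 1 ≤ n) (hx : n * (n-1) ≤ x) :
    ∃ a b : ℕ, x = a * n + b * (n + 1) := by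
  set q := x / n with hq
  set r := x % n with hr
  have hdm : n * q + r = x := Nat.div_add_mod x n
  have hrn : r < n := Nat.mod_lt _ (by omega)
  have hqr : r ≤ q := by
    have h2 : n * (n - 1) < n * (q + 1) := by
      have : n * (q+1) = n * q + n := by ring
      omega
    have h3 : n - 1 < q + 1 := Nat.lt_of_mul_lt_mul_left h2
    omega
  refine ⟨q - r, r, ?_⟩
  have e1 : (q - r) * n + r * n = q * n := by rw [← Nat.add_mul, Nat.sub_add_cancel hqr]
  have e2 : r * (n+1) = r * n + r := by ring
  have e3 : q * n = n * q := by ring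
  omega

end KCG
namespace KCG
open Finset

lemma stair_mem (n a' b' : ℕ) (h : b' ≤ a') :
    ∃ a b : ℕ, a' * n + b' = a * n + b * (n + 1) := by
  refine ⟨a' - b', b', ?_⟩
  have e1 : (a' - b') * n + b' * n = a' * n := by rw [← Nat.add_mul, Nat.sub_add_cancel h]
  have e2 : b' * (n+1) = b' * n + b' := by ring
  omega

lemma stair_inj (n : ℕ) (a₁ b₁ a₂ b₂ : ℕ) (h1 : b₁ < n) (h2 : b₂ < n)
    (h : a₁ * n + b₁ = a₂ * n + b₂) : a₁ = a₂ ∧ b₁ = b₂ := by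
  have : a₁ = a₂ := by
    rcases lt_trichotomy a₁ a₂ with hlt | heq | hgt
    · exfalso
      have e1 : (a₁ + 1) * n ≤ a₂ * n := Nat.mul_le_mul_right _ (by omega)
      have e2 : (a₁ + 1) * n = a₁ * n + n := by ring
      omega
    · exact heq
    · exfalso
      have e1 : (a₂ + 1) * n ≤ a₁ * n := Nat.mul_le_mul_right _ (by omega)
      have e2 : (a₂ + 1) * n = a₂ * n + n := by ring
      omega
  subst this
  omega

lemma sum_succ_eq_tri (a : ℕ) : ∑ a' ∈ range a, (a' + 1) = tri (a+1) := by
  rw [Finset.sum_add_distrib, Finset.sum_const, Finset.card_range, smul_eq_mul, mul_one,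
    tri_succ]
  rfl

lemma pair_count (n M : ℕ) (hn : 1 ≤ n) (hM : M + 1 ≤ n * n) :
    cnt n M ≤ ∑ s ∈ range n, ((range (M+1)).filter (fun t => n * s + (n+1) * t ≤ M)).card := by
  rw [← Finset.card_sigma]
  apply Finset.card_le_card_of_surjOn (fun p => n * p.1 + (n+1) * p.2)
  intro x hx
  simp only [Finset.coe_filter, Set.mem_setOf_eq, mem_range] at hx
  obtain ⟨hxM, A, B, rfl⟩ := hx
  refine ⟨⟨A % (n+1), B + n * (A / (n+1))⟩, ?_, ?_⟩
  · -- membership in the sigma set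
    have hdm : (n+1) * (A / (n+1)) + A % (n+1) = A := Nat.div_add_mod A (n+1)
    have e1 : (n+1) * (B + n * (A / (n+1))) = (n+1) * B + n * ((n+1) * (A / (n+1))) := by ring
    have e2 : n * ((n+1) * (A / (n+1)) + A % (n+1)) = n * A := by rw [hdm]
    have e3 : n * ((n+1) * (A / (n+1)) + A % (n+1))
        = n * ((n+1) * (A / (n+1))) + n * (A % (n+1)) := by ring
    have e4 : A * n = n * A := by ring
    have e5 : B * (n+1) = (n+1) * B := by ring
    have hval : n * (A % (n+1)) + (n+1) * (B + n * (A / (n+1))) = A * n + B * (n+1) := by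
      omega
    have hfst : A % (n+1) < n := by
      by_contra hc
      push_neg at hc
      have h6 : A % (n+1) < n + 1 := Nat.mod_lt _ (by omega)
      have h7 : A % (n+1) = n := by omega
      have h8 : n * (A % (n+1)) = n * n := by rw [h7]
      omega
    have hsnd : B + n * (A / (n+1)) ≤ M := by
      have h9 : (B + n * (A / (n+1))) ≤ (n+1) * (B + n * (A / (n+1))) :=
        Nat.le_mul_of_pos_left _ (by omega)
      omega
    simp only [Finset.mem_coe, Finset.mem_sigma, mem_range, mem_filter]
    exact ⟨hfst, by omega, by omega⟩
  · -- value equation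
    have hdm : (n+1) * (A / (n+1)) + A % (n+1) = A := Nat.div_add_mod A (n+1)
    have e1 : (n+1) * (B + n * (A / (n+1))) = (n+1) * B + n * ((n+1) * (A / (n+1))) := by ring
    have e2 : n * ((n+1) * (A / (n+1)) + A % (n+1)) = n * A := by rw [hdm]
    have e3 : n * ((n+1) * (A / (n+1)) + A % (n+1))
        = n * ((n+1) * (A / (n+1))) + n * (A % (n+1)) := by ring
    have e4 : A * n = n * A := by ring
    have e5 : B * (n+1) = (n+1) * B := by ring
    show n * (A % (n+1)) + (n+1) * (B + n * (A / (n+1))) = A * n + B * (n+1)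
    omega

lemma stair_count (n k m a : ℕ) (hn : 1 ≤ n) (ha2 : a ≤ n - 1)
    (ha1 : tri (a+1) ≤ k) (ha3 : a < n - 1 → k < tri (a+2))
    (hm : k + n * a ≤ m + tri (a+1)) : k + 1 ≤ cnt n m := by
  have hcntF : cnt n m =
      ((range (m+1)).filter (fun x => ∃ a b : ℕ, x = a * n + b * (n + 1))).card := rfl
  rcases lt_or_ge k (tri (a+1) + (a+1)) with hcase | hcase
  · -- staircase case: k = tri (a+1) + b with b ≤ a
    set b := k - tri (a+1) with hb
    have hba : b ≤ a := by omega
    have hmab : a * n + b ≤ m := by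
      have e : n * a = a * n := by ring
      omega
    have hcardT : ((range (a+1)).sigma
        (fun a' => range (if a' = a then b+1 else a'+1))).card = k + 1 := by
      rw [Finset.card_sigma]
      have h1 : ∀ a' ∈ range (a+1), (range (if a' = a then b+1 else a'+1)).card
          = if a' = a then b+1 else a'+1 := fun a' _ => Finset.card_range _
      rw [Finset.sum_congr rfl h1, Finset.sum_range_succ, if_pos rfl]
      have h2 : ∀ a' ∈ range a, (if a' = a then b+1 else a'+1) = a' + 1 := by
        intro a' ha'
        rw [if_neg]
        simp only [mem_range] at ha'
        omega
      rw [Finset.sum_congr rfl h2, sum_succ_eq_tri]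
      omega
    rw [hcntF, ← hcardT]
    apply Finset.card_le_card_of_injOn (fun p => p.1 * n + p.2)
    · rintro ⟨a', b'⟩ hp
      simp only [Finset.mem_coe, Finset.mem_sigma, mem_range] at hp
      obtain ⟨hpa, hpb⟩ := hp
      have hb'a' : (a' ≠ a ∧ b' ≤ a') ∨ (a' = a ∧ b' ≤ b) := by
        by_cases h : a' = a
        · right
          rw [if_pos h] at hpb
          exact ⟨h, by omega⟩
        · left
          rw [if_neg h] at hpb
          exact ⟨h, by omega⟩
      have hval : a' * n + b' ≤ a * n + b := by
        rcases hb'a' with ⟨hne, h⟩ | ⟨rfl, h⟩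
        · have e1 : (a' + 1) * n ≤ a * n := Nat.mul_le_mul_right _ (by omega)
          have e2 : (a' + 1) * n = a' * n + n := by ring
          omega
        · omega
      simp only [Finset.mem_coe, mem_filter, mem_range]
      refine ⟨Nat.lt_succ_of_le (le_trans hval hmab), ?_⟩
      have hb'le : b' ≤ a' := by
        rcases hb'a' with ⟨hne, h⟩ | ⟨rfl, h⟩
        · exact h
        · omega
      exact stair_mem n a' b' hb'le
    · rintro ⟨a₁, b₁⟩ hp ⟨a₂, b₂⟩ hq hpq
      simp only [Finset.coe_sigma, Set.mem_sigma_iff, Finset.mem_coe, mem_range] at hp hq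
      have hb₁ : b₁ < n := by
        rcases hp with ⟨h1, h2⟩
        split_ifs at h2 <;> omega
      have hb₂ : b₂ < n := by
        rcases hq with ⟨h1, h2⟩
        split_ifs at h2 <;> omega
      obtain ⟨e1, e2⟩ := stair_inj n a₁ b₁ a₂ b₂ hb₁ hb₂ hpq
      simp [e1, e2]
  · -- large case : a = n - 1 and k ≥ tri n
    have han : a = n - 1 := by
      by_contra hc
      have h1 := ha3 (by omega)
      have h2 := tri_succ (a+1)
      have e0 : a + 1 + 1 = a + 2 := rfl
      rw [e0] at h2
      omega
    have hn' : n = a + 1 := by omega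
    subst hn'
    simp only [Nat.add_sub_cancel] at *
    have htr : tri (a+2) = tri (a+1) + (a+1) := tri_succ (a+1)
    have h2t : 2 * tri (a+1) = a * (a+1) := two_tri a
    have hmk : k + tri (a+1) ≤ m := by
      have e1 : (a+1) * a = a * (a+1) := by ring
      omega
    set A1 := ((range a).sigma (fun a' => range (a'+1))).image
      (fun p => p.1 * (a+1) + p.2) with hA1
    set A2 := Finset.Icc ((a+1)*a) m with hA2
    have hT1card : ((range a).sigma (fun a' => range (a'+1))).card = tri (a+1) := by
      rw [Finset.card_sigma]
      have h1 : ∀ a' ∈ range a, (range (a'+1)).card = a' + 1 := fun a' _ => Finset.card_range _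
      rw [Finset.sum_congr rfl h1, sum_succ_eq_tri]
    have hT1small : ∀ p ∈ (range a).sigma (fun a' => range (a'+1)),
        p.1 * (a+1) + p.2 < (a+1) * a := by
      rintro ⟨a', b'⟩ hp
      show a' * (a+1) + b' < (a+1) * a
      simp only [Finset.mem_sigma, mem_range] at hp
      have e1 : (a' + 1) * (a+1) ≤ a * (a+1) := Nat.mul_le_mul_right _ (by omega)
      have e2 : (a' + 1) * (a+1) = a' * (a+1) + (a+1) := by ring
      have e3 : a * (a+1) = (a+1) * a := by ring
      omega
    have hA1card : A1.card = tri (a+1) := by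
      rw [hA1, Finset.card_image_of_injOn, hT1card]
      rintro ⟨a₁, b₁⟩ hp ⟨a₂, b₂⟩ hq hpq
      simp only [Finset.coe_sigma, Set.mem_sigma_iff, Finset.mem_coe, mem_range] at hp hq
      obtain ⟨e1, e2⟩ := stair_inj (a+1) a₁ b₁ a₂ b₂ (by omega) (by omega) hpq
      simp [e1, e2]
    have hA2card : A2.card = m + 1 - (a+1)*a := by
      rw [hA2, Nat.card_Icc]
    have hsub : A1 ∪ A2 ⊆ (range (m+1)).filter
        (fun x => ∃ u v : ℕ, x = u * (a+1) + v * (a+1+1)) := by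
      intro x hx
      rcases Finset.mem_union.1 hx with hx | hx
      · rw [hA1] at hx
        obtain ⟨⟨a', b'⟩, hp, rfl⟩ := Finset.mem_image.1 hx
        show a' * (a+1) + b' ∈ _
        have hsmall : a' * (a+1) + b' < (a+1) * a := hT1small _ hp
        simp only [Finset.mem_sigma, mem_range] at hp
        simp only [mem_filter, mem_range]
        have hle : (a+1) * a ≤ m := by
          have e1 : (a+1) * a = a * (a+1) := by ring
          omega
        exact ⟨by omega, stair_mem (a+1) a' b' (by omega)⟩
      · rw [hA2, Finset.mem_Icc] at hx
        simp only [mem_filter, mem_range]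
        refine ⟨by omega, mem_S_of_ge (a+1) x (by omega) ?_⟩
        simp only [Nat.add_sub_cancel]
        exact hx.1
    have hdisj : Disjoint A1 A2 := by
      rw [Finset.disjoint_left]
      intro x hx1 hx2
      rw [hA1] at hx1
      obtain ⟨⟨a', b'⟩, hp, rfl⟩ := Finset.mem_image.1 hx1
      have h9 : a' * (a+1) + b' < (a+1) * a := hT1small _ hp
      rw [hA2, Finset.mem_Icc] at hx2
      have h10 : (a+1) * a ≤ a' * (a+1) + b' := hx2.1
      omega
    have hcu : A1.card + A2.card = (A1 ∪ A2).card := (Finset.card_union_of_disjoint hdisj).symm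
    have hFc : (A1 ∪ A2).card ≤ ((range (m+1)).filter
        (fun x => ∃ u v : ℕ, x = u * (a+1) + v * (a+1+1))).card := Finset.card_le_card hsub
    rw [hcntF]
    have e4 : (a+1)*a = a*(a+1) := by ring
    omega

end KCG
namespace Multigraph
open Finset

variable {G : Multigraph} {n : ℕ}

lemma emod_sub_emod (x y N : ℤ) : (x - y) % N = (x - y % N) % N := by
  rw [Int.sub_emod, Int.sub_emod x (y % N), Int.emod_emod_of_dvd _ dvd_rfl]

lemma emod_sub_eq (n s r : ℕ) (hs : s ≤ n) (hr : r ≤ n) :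
    ((s:ℤ) - r) % ((n:ℤ)+1) = (s:ℤ) - r + (if s < r then ((n:ℤ)+1) else 0) := by
  by_cases h : s < r
  · rw [if_pos h]
    have h1 : ((s:ℤ) - r + ((n:ℤ)+1)) % ((n:ℤ)+1) = ((s:ℤ) - r) % ((n:ℤ)+1) := by
      have := Int.add_mul_emod_self_left (a := (s:ℤ) - r) (b := (n:ℤ)+1) (c := 1)
      simpa using this
    rw [← h1, Int.emod_eq_of_lt (by push_cast; omega) (by push_cast; omega)]
  · rw [if_neg h, add_zero, Int.emod_eq_of_lt (by push_cast; omega) (by push_cast; omega)]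

lemma pos_step (hn : 1 ≤ n) (hG : G.IsComplete (n+1)) (P : G.V) (m k : ℕ)
    (hk : k + 1 = KCG.cnt n m) (E : G.V → ℤ) (hE : G.Effective E) (hdeg : G.deg E = k) :
    G.LinNonempty (G.pt P m - E) := by
  classical
  have hN : (0:ℤ) < (n:ℤ)+1 := by positivity
  set N : ℤ := (n:ℤ)+1 with hNdef
  set Q := Finset.univ.erase P with hQ
  have hQcard : Q.card = n := by
    rw [hQ, Finset.card_erase_of_mem (Finset.mem_univ P), Finset.card_univ, hG.1]
    omega
  set r : G.V → ℕ := fun v => ((E v) % N).toNat with hr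
  have hrval : ∀ v, ((r v : ℤ)) = E v % N := fun v =>
    Int.toNat_of_nonneg (Int.emod_nonneg _ (by positivity))
  have hrle : ∀ v, r v ≤ n := by
    intro v
    have h1 := Int.emod_lt_of_pos (E v) hN
    have h2 := hrval v
    omega
  have hEr : ∀ v, (r v : ℤ) ≤ E v := fun v => by
    rw [hrval v]; exact emod_le_self hN (hE v)
  have hdegsplit : E P + ∑ v ∈ Q, E v = k := by
    rw [hQ, Finset.add_sum_erase _ _ (Finset.mem_univ P)]
    exact hdeg
  have hkm : k ≤ m := by have := KCG.cnt_le n m; omega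
  set C : ℕ := ∑ v ∈ Q, r v with hC
  have hCk : (C:ℤ) ≤ (k:ℤ) - E P := by
    have h1 : ∑ v ∈ Q, (r v : ℤ) ≤ ∑ v ∈ Q, E v := Finset.sum_le_sum fun v _ => hEr v
    have h2 : ((C:ℕ):ℤ) = ∑ v ∈ Q, (r v : ℤ) := by rw [hC]; push_cast; rfl
    linarith
  have hCk' : C ≤ k := by
    have := hE P
    have : (C:ℤ) ≤ (k:ℤ) := by linarith
    exact_mod_cast this
  have main : ∃ s : ℕ, s ≤ n ∧ ∑ v ∈ Q, (((s:ℤ) - E v) % N) ≤ (m:ℤ) - k := by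
    by_contra hcon
    push_neg at hcon
    set M : ℕ := m - k + C with hM
    set R : ℕ → ℕ := fun s => (Q.filter (fun v => s < r v)).card with hR
    have formula : ∀ s : ℕ, s ≤ n → ∑ v ∈ Q, (((s:ℤ) - E v) % N)
        = (n:ℤ) * s - C + N * R s := by
      intro s hs
      have term : ∀ v ∈ Q, ((s:ℤ) - E v) % N
          = (s:ℤ) - (r v : ℤ) + (if s < r v then N else 0) := by
        intro v _
        rw [emod_sub_emod, ← hrval v, hNdef, emod_sub_eq n s (r v) hs (hrle v)]
      rw [Finset.sum_congr rfl term, Finset.sum_add_distrib, Finset.sum_sub_distrib]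
      have e1 : ∑ _v ∈ Q, (s:ℤ) = (n:ℤ) * s := by
        rw [Finset.sum_const, hQcard]; push_cast; ring
      have e2 : ∑ v ∈ Q, (r v : ℤ) = (C:ℤ) := by rw [hC]; push_cast; rfl
      have e3 : ∑ v ∈ Q, (if s < r v then N else 0) = N * R s := by
        rw [← Finset.sum_filter, Finset.sum_const, nsmul_eq_mul, mul_comm]
      rw [e1, e2, e3]
    have hcon' : ∀ s : ℕ, s ≤ n → (M:ℤ) + 1 ≤ (n:ℤ)*s + N * R s := by
      intro s hs
      have h1 := hcon s hs
      rw [formula s hs] at h1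
      have hMz : (M:ℤ) = (m:ℤ) - k + C := by rw [hM]; push_cast; omega
      linarith
    have hRn : R n = 0 := by
      rw [hR]
      simp only [Finset.card_eq_zero]
      apply Finset.filter_false_of_mem
      intro v _
      have := hrle v
      omega
    have hMn : M + 1 ≤ n * n := by
      have h1 := hcon' n (le_refl n)
      rw [hRn] at h1
      have h2 : ((M + 1 : ℕ) : ℤ) ≤ ((n * n : ℕ) : ℤ) := by push_cast at h1 ⊢; linarith
      exact_mod_cast h2
    have hcount : ∀ s ∈ range n,
        ((range (M+1)).filter (fun t => n*s + (n+1)*t ≤ M)).card ≤ R s := by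
      intro s hs
      rw [mem_range] at hs
      have hsub : (range (M+1)).filter (fun t => n*s + (n+1)*t ≤ M) ⊆ range (R s) := by
        intro t ht
        simp only [mem_filter, mem_range] at ht ⊢
        have c1 : ((n:ℤ)*s + ((n:ℤ)+1)*t) ≤ (M:ℤ) := by exact_mod_cast ht.2
        have c2 : ((n:ℤ)+1)*t < ((n:ℤ)+1)* (R s) := by
          have := hcon' s (by omega)
          rw [hNdef] at this
          linarith
        have c3 : (t:ℤ) < ((R s : ℕ):ℤ) := lt_of_mul_lt_mul_left c2 (by positivity)
        exact_mod_cast c3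
      calc _ ≤ (range (R s)).card := Finset.card_le_card hsub
        _ = R s := Finset.card_range _
    have hdouble : C = ∑ s ∈ range n, R s := by
      rw [hC, hR]
      have e1 : ∀ v ∈ Q, r v = ((range n).filter (fun s => s < r v)).card := by
        intro v _
        have : (range n).filter (fun s => s < r v) = range (r v) := by
          ext s
          simp only [mem_filter, mem_range]
          have := hrle v
          omega
        rw [this, Finset.card_range]
      rw [Finset.sum_congr rfl e1]
      simp only [Finset.card_filter]
      rw [Finset.sum_comm]
    have hchain : KCG.cnt n M ≤ C := by
      calc KCG.cnt n M ≤ ∑ s ∈ range n,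
            ((range (M+1)).filter (fun t => n*s + (n+1)*t ≤ M)).card :=
          KCG.pair_count n M hn hMn
        _ ≤ ∑ s ∈ range n, R s := Finset.sum_le_sum hcount
        _ = C := hdouble.symm
    have hgap : KCG.cnt n m ≤ KCG.cnt n M + (m - M) := KCG.cnt_gap n M m (by omega)
    omega
  obtain ⟨s, hs, hQs⟩ := main
  rw [crit hG]
  refine ⟨(s:ℤ), ?_⟩
  have hdegD : G.deg (G.pt P m - E) = (m:ℤ) - k := by
    rw [deg_sub, deg_pt, hdeg]
  rw [hdegD]
  have hsplit : ∑ v, (((G.pt P m - E) v + (s:ℤ)) % N)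
      = (((m:ℤ) - E P + s) % N) + ∑ v ∈ Q, (((s:ℤ) - E v) % N) := by
    rw [← Finset.add_sum_erase _ _ (Finset.mem_univ P), ← hQ]
    congr 1
    · congr 1
      simp [pt]
    · apply Finset.sum_congr rfl
      intro v hv
      have hvP : v ≠ P := by
        rw [hQ] at hv
        exact Finset.ne_of_mem_erase hv
      congr 1
      simp [pt, hvP]
      ring
  rw [hsplit]
  set QS := ∑ v ∈ Q, (((s:ℤ) - E v) % N) with hQS
  have hQSnn : 0 ≤ QS := Finset.sum_nonneg fun v _ => Int.emod_nonneg _ (by positivity)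
  set SE := ∑ v ∈ Q, E v with hSE
  have hQSmod : QS % N = ((n:ℤ) * s - SE) % N := by
    have h1 : (∑ v ∈ Q, ((s:ℤ) - E v)) % N = QS % N := Finset.sum_int_mod Q N _
    have h2 : ∑ v ∈ Q, ((s:ℤ) - E v) = (n:ℤ) * s - SE := by
      rw [Finset.sum_sub_distrib, Finset.sum_const, hQcard, ← hSE, nsmul_eq_mul]
    rw [← h1, h2]
  have hPterm : ((m:ℤ) - E P + s) % N = (((m:ℤ) - k) - QS) % N := by
    have hD : (m:ℤ) - E P + (s:ℤ) - (((m:ℤ) - k) - QS) = SE + s + QS := by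
      linarith [hdegsplit]
    have h5 : SE + (s:ℤ) + ((n:ℤ) * s - SE) = N * s := by rw [hNdef]; ring
    have h6 : (SE + (s:ℤ) + QS) % N = 0 := by
      have h4 : (SE + (s:ℤ) + QS) % N = (SE + (s:ℤ) + ((n:ℤ) * s - SE)) % N :=
        Int.ModEq.add_left _ hQSmod
      rw [h4, h5, Int.mul_emod_right]
    rw [Int.emod_eq_emod_iff_emod_sub_eq_zero, hD]
    exact h6
  have hP2 : ((m:ℤ) - E P + s) % N ≤ ((m:ℤ) - k) - QS := by
    rw [hPterm]
    exact emod_le_self hN (by linarith)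
  linarith

end Multigraph
namespace Multigraph
open Finset

variable {G : Multigraph} {n : ℕ}

lemma emod_sub_emod' (x y N : ℤ) : (x - y) % N = (x % N - y) % N := by
  rw [Int.sub_emod, Int.sub_emod (x % N) y, Int.emod_emod_of_dvd _ dvd_rfl]

lemma neg_step (hn : 1 ≤ n) (hG : G.IsComplete (n+1)) (P : G.V) (m k : ℕ)
    (hk : KCG.cnt n m = k) :
    ∃ E : G.V → ℤ, G.Effective E ∧ G.deg E = (k:ℤ) ∧ ¬ G.LinNonempty (G.pt P m - E) := by
  classical
  have hN : (0:ℤ) < (n:ℤ)+1 := by positivity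
  set a := Nat.findGreatest (fun j => KCG.tri (j+1) ≤ k) (n-1) with ha
  have ha1 : KCG.tri (a+1) ≤ k := by
    rw [ha]
    exact Nat.findGreatest_spec (P := fun j => KCG.tri (j+1) ≤ k) (Nat.zero_le _)
      (by simp [KCG.tri])
  have ha2 : a ≤ n - 1 := Nat.findGreatest_le _
  have ha3 : a < n - 1 → k < KCG.tri (a+2) := by
    intro h
    by_contra hc
    push_neg at hc
    have h2 : ¬ (KCG.tri (a+1+1) ≤ k) :=
      Nat.findGreatest_is_greatest (P := fun j => KCG.tri (j+1) ≤ k) (n := n - 1)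
        (k := a + 1) (by omega) (by omega)
    exact h2 hc
  have key : m + KCG.tri (a+1) + 1 ≤ k + n * a := by
    by_contra hc
    push_neg at hc
    have := KCG.stair_count n k m a hn ha2 ha1 ha3 (by omega)
    omega
  -- enumeration of the non-P vertices
  have hcards : Fintype.card {v : G.V // v ≠ P} = n := by
    have h1 : Fintype.card {v : G.V // ¬ (v = P)} =
        Fintype.card G.V - Fintype.card {v : G.V // v = P} :=
      Fintype.card_subtype_compl _
    rw [Fintype.card_subtype_eq, hG.1] at h1
    simpa using h1
  set eqv : Fin n ≃ {v : G.V // v ≠ P} := (Fintype.equivFinOfCardEq hcards).symm with heqv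
  set E : G.V → ℤ := fun v =>
    if h : v = P then ((k - KCG.tri (a+1) : ℕ) : ℤ)
    else (if ((eqv.symm ⟨v, h⟩ : Fin n) : ℕ) ≤ a
      then (((eqv.symm ⟨v, h⟩ : Fin n) : ℕ) : ℤ) else 0) with hE
  have hEP : E P = ((k - KCG.tri (a+1) : ℕ) : ℤ) := by rw [hE]; simp
  have hEι : ∀ i : Fin n, E ((eqv i).1) = if (i:ℕ) ≤ a then ((i:ℕ):ℤ) else 0 := by
    intro i
    have hne : (eqv i).1 ≠ P := (eqv i).2
    rw [hE]
    simp only [dif_neg hne]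
    rw [Subtype.coe_eta, Equiv.symm_apply_apply]
  set Q := Finset.univ.erase P with hQ
  have transport : ∀ F : G.V → ℤ, (∑ v ∈ Q, F v) = ∑ i : Fin n, F ((eqv i).1) := by
    intro F
    rw [hQ]
    rw [Finset.sum_subtype (p := fun v => v ≠ P) _ (by intro x; simp) F]
    exact (Equiv.sum_comp eqv (fun x => F x.1)).symm
  have hQE : ∑ v ∈ Q, E v = ((KCG.tri (a+1) : ℕ) : ℤ) := by
    rw [transport E]
    rw [Finset.sum_congr rfl (fun i _ => hEι i),
      Fin.sum_univ_eq_sum_range (fun j => if j ≤ a then (j:ℤ) else 0) n]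
    have h2 : ∑ j ∈ range n, (if j ≤ a then (j:ℤ) else 0)
        = ∑ j ∈ range (a+1), (if j ≤ a then (j:ℤ) else 0) := by
      symm
      apply Finset.sum_subset
      · apply Finset.range_subset_range.2; omega
      · intro x _ hx
        rw [mem_range] at hx
        rw [if_neg (by omega)]
    rw [h2, Finset.sum_congr rfl (fun j hj => if_pos (by rw [mem_range] at hj; omega))]
    rw [KCG.tri]
    push_cast
    rfl
  have hEeff : G.Effective E := by
    intro v
    by_cases h : v = P
    · simp only [hE, dif_pos h]; positivity
    · simp only [hE, dif_neg h]
      split_ifs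
      · positivity
      · exact le_refl 0
  have hGauss : ∑ j ∈ range n, (if j ≤ a then (j:ℤ) else 0) = ((KCG.tri (a+1) : ℕ) : ℤ) := by
    have h2 : ∑ j ∈ range n, (if j ≤ a then (j:ℤ) else 0)
        = ∑ j ∈ range (a+1), (if j ≤ a then (j:ℤ) else 0) := by
      symm
      apply Finset.sum_subset
      · apply Finset.range_subset_range.2; omega
      · intro x _ hx
        rw [mem_range] at hx
        rw [if_neg (by omega)]
    rw [h2, Finset.sum_congr rfl (fun j hj => if_pos (by rw [mem_range] at hj; omega))]
    rw [KCG.tri]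
    push_cast
    rfl
  have hdegE : G.deg E = (k:ℤ) := by
    have h1 : G.deg E = E P + ∑ v ∈ Q, E v := by
      rw [deg, hQ, Finset.add_sum_erase _ _ (Finset.mem_univ P)]
    rw [h1, hEP, hQE, Nat.cast_sub ha1]
    ring
  refine ⟨E, hEeff, hdegE, ?_⟩
  intro hL
  rw [crit hG] at hL
  obtain ⟨σ, hσ⟩ := hL
  have hdegD : G.deg (G.pt P m - E) = (m:ℤ) - k := by rw [deg_sub, deg_pt, hdegE]
  rw [hdegD] at hσ
  set s : ℕ := (σ % ((n:ℤ)+1)).toNat with hs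
  have hsval : (s:ℤ) = σ % ((n:ℤ)+1) := Int.toNat_of_nonneg (Int.emod_nonneg _ (by positivity))
  have hsle : s ≤ n := by
    have h1 := Int.emod_lt_of_pos σ hN
    omega
  have hsplit : ∑ v, (((G.pt P m - E) v + σ) % ((n:ℤ)+1))
      = (((m:ℤ) - E P + σ) % ((n:ℤ)+1)) + ∑ v ∈ Q, ((σ - E v) % ((n:ℤ)+1)) := by
    rw [← Finset.add_sum_erase _ _ (Finset.mem_univ P), ← hQ]
    congr 1
    · congr 1
      simp [pt]
    · apply Finset.sum_congr rfl
      intro v hv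
      have hvP : v ≠ P := Finset.ne_of_mem_erase (hQ ▸ hv)
      congr 1
      simp [pt, hvP]
      ring
  have hterm : ∀ i : Fin n, ((σ - E ((eqv i).1)) % ((n:ℤ)+1))
      = (s:ℤ) - (if (i:ℕ) ≤ a then ((i:ℕ):ℤ) else 0)
        + (if s < (if (i:ℕ) ≤ a then (i:ℕ) else 0) then ((n:ℤ)+1) else 0) := by
    intro i
    rw [hEι i]
    by_cases hia : (i:ℕ) ≤ a
    · rw [if_pos hia, if_pos hia, emod_sub_emod', ← hsval,
        emod_sub_eq n s (i:ℕ) hsle (by omega)]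
    · rw [if_neg hia, if_neg hia, emod_sub_emod', ← hsval]
      have h0 := emod_sub_eq n s 0 hsle (by omega)
      simp only [Nat.cast_zero] at h0
      exact h0
  have hQlower : ((n:ℤ) * a - ((KCG.tri (a+1) : ℕ) : ℤ)) ≤ ∑ v ∈ Q, ((σ - E v) % ((n:ℤ)+1)) := by
    rw [transport (fun v => (σ - E v) % ((n:ℤ)+1))]
    rw [Finset.sum_congr rfl (fun i _ => hterm i),
      Fin.sum_univ_eq_sum_range (fun j => (s:ℤ) - (if j ≤ a then ((j:ℕ):ℤ) else 0)
        + (if s < (if j ≤ a then j else 0) then ((n:ℤ)+1) else 0)) n]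
    rw [Finset.sum_add_distrib, Finset.sum_sub_distrib, hGauss]
    have e1 : ∑ _j ∈ range n, (s:ℤ) = (n:ℤ) * s := by
      rw [Finset.sum_const, Finset.card_range, nsmul_eq_mul]
    rw [e1]
    have hIte : ((n:ℤ)+1) * ((a - s : ℕ):ℤ)
        ≤ ∑ j ∈ range n, (if s < (if j ≤ a then j else 0) then ((n:ℤ)+1) else 0) := by
      rcases le_or_gt a s with hcase | hcase
      · have hz : a - s = 0 := by omega
        rw [hz]
        simp only [Nat.cast_zero, mul_zero]
        refine Finset.sum_nonneg fun j _ => ?_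
        have : (0:ℤ) ≤ (n:ℤ)+1 := by positivity
        split_ifs <;> simp [this]
      · have hsubset : Finset.Ioc s a ⊆ range n := by
          intro j hj
          rw [Finset.mem_Ioc] at hj
          rw [mem_range]
          omega
        have hterm2 : ∀ j ∈ Finset.Ioc s a,
            (if s < (if j ≤ a then j else 0) then ((n:ℤ)+1) else 0) = ((n:ℤ)+1) := by
          intro j hj
          rw [Finset.mem_Ioc] at hj
          rw [if_pos hj.2, if_pos hj.1]
        have hsum2 : ∑ j ∈ Finset.Ioc s a, (if s < (if j ≤ a then j else 0) then ((n:ℤ)+1) else 0)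
            = ((a - s : ℕ):ℤ) * ((n:ℤ)+1) := by
          rw [Finset.sum_congr rfl hterm2, Finset.sum_const, Nat.card_Ioc, nsmul_eq_mul]
        have hnn : ∀ j ∈ range n, j ∉ Finset.Ioc s a →
            (0:ℤ) ≤ (if s < (if j ≤ a then j else 0) then ((n:ℤ)+1) else 0) := by
          intro j _ _
          have : (0:ℤ) ≤ (n:ℤ)+1 := by positivity
          split_ifs <;> simp [this]
        calc ((n:ℤ)+1) * ((a - s : ℕ):ℤ) = ((a - s : ℕ):ℤ) * ((n:ℤ)+1) := by ring
          _ = _ := hsum2.symm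
          _ ≤ _ := Finset.sum_le_sum_of_subset_of_nonneg hsubset hnn
    have hfin : (n:ℤ) * a ≤ (n:ℤ) * s + ((n:ℤ)+1) * ((a - s : ℕ):ℤ) := by
      rcases le_or_gt a s with hcase | hcase
      · have h3 : (a:ℤ) ≤ (s:ℤ) := by exact_mod_cast hcase
        have h4 : (n:ℤ) * a ≤ (n:ℤ) * s := by
          apply mul_le_mul_of_nonneg_left h3 (by positivity)
        have h5 : (0:ℤ) ≤ ((n:ℤ)+1) * ((a - s : ℕ):ℤ) := by positivity
        linarith
      · have h3 : ((a - s : ℕ):ℤ) = (a:ℤ) - s := by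
          rw [Nat.cast_sub hcase.le]
        have h4 : ((n:ℤ)+1) * ((a:ℤ) - s) = (n:ℤ)*a - (n:ℤ)*s + a - s := by ring
        have h5 : (s:ℤ) ≤ (a:ℤ) := by exact_mod_cast hcase.le
        rw [h3, h4]
        linarith
    linarith
  have hPnn : 0 ≤ ((m:ℤ) - E P + σ) % ((n:ℤ)+1) := Int.emod_nonneg _ (by positivity)
  rw [hsplit] at hσ
  have hcontr : (n:ℤ) * a - ((KCG.tri (a+1) : ℕ) : ℤ) ≤ (m:ℤ) - k := by linarith
  have hcast := (Nat.cast_le (α := ℤ)).mpr key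
  push_cast at hcast
  linarith

end Multigraph
namespace Multigraph
open Finset

variable {G : Multigraph} {n : ℕ}

lemma lap_zero (v : G.V) : G.lap (0 : G.V → ℤ) v = 0 := by
  unfold lap; simp

lemma lin_zero (P : G.V) (m : ℕ) : G.LinNonempty (G.pt P (m:ℤ)) := by
  refine ⟨0, fun v => ?_⟩
  simp only [Pi.sub_apply, lap_zero, sub_zero, pt]
  split_ifs
  · positivity
  · exact le_refl 0

lemma rank_deg_neg {D : G.V → ℤ} (h : G.deg D < 0) : G.rank D = -1 := by
  rw [rank, if_neg]
  intro hL
  have := lin_deg_nonneg hL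
  omega

lemma deg_add (D E : G.V → ℤ) : G.deg (D + E) = G.deg D + G.deg E := by
  unfold deg; simp [Finset.sum_add_distrib]

lemma Kstep (P : G.V) (m : ℤ) (k : ℕ)
    (hk : ∀ E, G.Effective E → G.deg E = ((k:ℤ)+1) → G.LinNonempty (G.pt P m - E)) :
    ∀ E, G.Effective E → G.deg E = (k:ℤ) → G.LinNonempty (G.pt P m - E) := by
  intro E hE hdeg
  have hE' : G.Effective (E + G.pt P 1) := by
    intro v
    have h1 := hE v
    simp only [Pi.add_apply, pt]
    split_ifs <;> omega
  have hdeg' : G.deg (E + G.pt P 1) = (k:ℤ)+1 := by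
    rw [deg_add, deg_pt, hdeg]
  obtain ⟨f, hf⟩ := hk _ hE' hdeg'
  refine ⟨f, fun v => ?_⟩
  have h2 := hf v
  simp only [Pi.sub_apply, Pi.add_apply, pt] at h2 ⊢
  split_ifs at h2 ⊢ <;> omega

lemma Kdown (P : G.V) (m : ℤ) : ∀ k : ℕ,
    (∀ E, G.Effective E → G.deg E = (k:ℤ) → G.LinNonempty (G.pt P m - E)) →
    ∀ j : ℕ, j ≤ k →
    (∀ E, G.Effective E → G.deg E = (j:ℤ) → G.LinNonempty (G.pt P m - E)) := by
  intro k
  induction k with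
  | zero =>
    intro hk j hj
    have : j = 0 := by omega
    subst this
    exact hk
  | succ k ih =>
    intro hk j hj
    rcases eq_or_lt_of_le hj with rfl | hlt
    · exact hk
    · refine ih (Kstep P m k ?_) j (by omega)
      intro E hE hdeg
      exact hk E hE (by push_cast at hdeg ⊢; omega)

lemma rank_pt (hn : 1 ≤ n) (hG : G.IsComplete (n+1)) (P : G.V) (m : ℕ) :
    G.rank (G.pt P (m:ℤ)) = (KCG.cnt n m : ℤ) - 1 := by
  have hLin : G.LinNonempty (G.pt P (m:ℤ)) := lin_zero P m
  rw [rank, if_pos hLin]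
  have hc1 : 1 ≤ KCG.cnt n m := KCG.cnt_pos n m
  set k₀ := KCG.cnt n m - 1 with hk₀
  set K := {k : ℕ | ∀ E : G.V → ℤ, G.Effective E → G.deg E = (k : ℤ) →
      G.LinNonempty (G.pt P (m:ℤ) - E)} with hK
  have hmem : k₀ ∈ K := by
    intro E hE hdeg
    exact pos_step hn hG P m k₀ (by omega) E hE hdeg
  have hub : ∀ k ∈ K, k ≤ k₀ := by
    intro k hkK
    by_contra hc
    push_neg at hc
    have hKc : KCG.cnt n m ∈ K := Kdown P (m:ℤ) k hkK (KCG.cnt n m) (by omega)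
    obtain ⟨E, hE, hdeg, hnL⟩ := neg_step hn hG P m (KCG.cnt n m) rfl
    exact hnL (hKc E hE hdeg)
  have hsup : sSup K = k₀ :=
    le_antisymm (csSup_le ⟨k₀, hmem⟩ hub) (le_csSup ⟨k₀, fun x hx => hub x hx⟩ hmem)
  rw [hsup]
  push_cast [hk₀]
  omega

lemma cnt_succ (j : ℕ) : KCG.cnt n (j+1) =
    KCG.cnt n j + (if (∃ a b : ℕ, j+1 = a*n+b*(n+1)) then 1 else 0) := by
  unfold KCG.cnt
  rw [Finset.range_add_one, Finset.filter_insert]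
  split_ifs
  · rw [Finset.card_insert_of_notMem (by
      intro hmem
      have := Finset.mem_of_mem_filter _ hmem
      rw [mem_range] at this
      omega)]
  · omega

end Multigraph

lemma KCG.cnt_zero (n : ℕ) : KCG.cnt n 0 = 1 :=
  le_antisymm (by simpa using KCG.cnt_le n 0) (KCG.cnt_pos n 0)

/-- The rank Weierstrass set of the complete graph `K_{n+1}` is `⟨n, n+1⟩`. -/
theorem Hr_complete (n : ℕ) (hn : 1 ≤ n) (G : Multigraph) (hG : G.IsComplete (n + 1))
    (P : G.V) :
    G.Hr P = {x : ℕ | ∃ a b : ℕ, x = a * n + b * (n + 1)} := by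
  ext x
  simp only [Multigraph.Hr, Set.mem_setOf_eq]
  cases x with
  | zero =>
    have h1 : G.rank (G.pt P (((0:ℕ):ℤ) - 1)) = -1 := by
      apply Multigraph.rank_deg_neg
      rw [Multigraph.deg_pt]
      norm_num
    have h2 : G.rank (G.pt P ((0:ℕ):ℤ)) = 0 := by
      rw [Multigraph.rank_pt hn hG P 0, KCG.cnt_zero]
      norm_num
    constructor
    · intro _
      exact ⟨0, 0, by ring⟩
    · intro _
      rw [h1, h2]
      norm_num
  | succ j =>
    have e1 : ((j+1 : ℕ):ℤ) - 1 = ((j:ℕ):ℤ) := by push_cast; ring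
    rw [e1, Multigraph.rank_pt hn hG P j, Multigraph.rank_pt hn hG P (j+1),
      Multigraph.cnt_succ]
    have hc1 := KCG.cnt_pos n j
    by_cases hx : ∃ a b : ℕ, j+1 = a*n+b*(n+1)
    · rw [if_pos hx]
      constructor
      · intro _
        exact hx
      · intro _
        push_cast
        omega
    · rw [if_neg hx]
      constructor
      · intro h
        exfalso
        push_cast at h
        omega
      · intro h
        exact absurd h hx
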